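/- For x > 0, the function v(x) = ∫_0^∞ exp((−t³+t)x) dt satisfies the inhomogeneous ODE −27x² v''(x) − 27x v'(x) + (4x² + 3) v(x) = −4x. -/

import Mathlib

open Real MeasureTheory Set Filter Polynomial Topology

/-- Eventual bound: `t^n e^{-c₁t³+c₂t} ≤ e^{-t}` for large `t`. -/
lemma bound18 (n : ℕ) {c₁ : ℝ} (c₂ : ℝ) (hc : 0 < c₁) :
    ∀ᶠ t : ℝ in atTop, t ^ n * Real.exp (-c₁ * t ^ 3 + c₂ * t) ≤ Real.exp (-t) := by
  have h2 : Tendsto (fun t : ℝ => c₁ * t ^ 2) atTop atTop :=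
    (tendsto_pow_atTop (two_ne_zero)).const_mul_atTop hc
  filter_upwards [eventually_ge_atTop (1 : ℝ), h2.eventually_ge_atTop (n + c₂ + 1)]
    with t ht1 ht2
  have ht0 : (0:ℝ) < t := lt_of_lt_of_le one_pos ht1
  have hpow : t ^ n ≤ Real.exp (n * t) := by
    calc t ^ n ≤ Real.exp t ^ n := by
          exact pow_le_pow_left₀ ht0.le (by linarith [Real.add_one_le_exp t]) n
      _ = Real.exp (n * t) := by rw [← Real.exp_nat_mul]
  calc t ^ n * Real.exp (-c₁ * t ^ 3 + c₂ * t)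
      ≤ Real.exp (n * t) * Real.exp (-c₁ * t ^ 3 + c₂ * t) := by
        apply mul_le_mul_of_nonneg_right hpow (Real.exp_pos _).le
    _ = Real.exp (n * t + (-c₁ * t ^ 3 + c₂ * t)) := by rw [← Real.exp_add]
    _ ≤ Real.exp (-t) := by
        apply Real.exp_le_exp.2
        have : (n + c₂ + 1) * t ≤ c₁ * t ^ 2 * t := by
          apply mul_le_mul_of_nonneg_right ht2 ht0.le
        nlinarith

lemma integ18 (n : ℕ) {c₁ : ℝ} (c₂ : ℝ) (hc : 0 < c₁) :
    IntegrableOn (fun t : ℝ => t ^ n * Real.exp (-c₁ * t ^ 3 + c₂ * t)) (Set.Ioi 0) := by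
  apply integrable_of_isBigO_exp_neg one_pos
  · exact (Continuous.continuousOn (by fun_prop))
  · apply Asymptotics.IsBigO.of_bound 1
    filter_upwards [bound18 n c₂ hc, eventually_ge_atTop (0:ℝ)] with t hb ht0
    rw [one_mul, Real.norm_eq_abs, Real.norm_eq_abs, abs_of_nonneg
      (by positivity), abs_of_nonneg (Real.exp_pos _).le]
    simpa using hb

lemma integPoly' (p : Polynomial ℝ) {c₁ : ℝ} (c₂ : ℝ) (hc : 0 < c₁) :
    IntegrableOn (fun t : ℝ => p.eval t * Real.exp (-c₁ * t ^ 3 + c₂ * t)) (Set.Ioi 0) := by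
  induction p using Polynomial.induction_on' with
  | add p q hp hq => simpa [add_mul, Pi.add_def] using hp.add hq
  | monomial n a =>
      simpa [Polynomial.eval_monomial, mul_assoc, IntegrableOn] using ((integ18 n c₂ hc).const_mul a)

lemma integPoly (p : Polynomial ℝ) {x : ℝ} (hx : 0 < x) :
    IntegrableOn (fun t : ℝ => p.eval t * Real.exp ((-t ^ 3 + t) * x)) (Set.Ioi 0) := by
  simpa [show ∀ t : ℝ, (-t ^ 3 + t) * x = -x * t ^ 3 + x * t from fun t => by ring]
    using integPoly' p x hx

lemma tend18 (p : Polynomial ℝ) {x : ℝ} (hx : 0 < x) :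
    Tendsto (fun t : ℝ => p.eval t * Real.exp ((-t ^ 3 + t) * x)) atTop (𝓝 0) := by
  have habs : Tendsto (fun t : ℝ => |p.eval t * Real.exp ((-t ^ 3 + t) * x)|) atTop (𝓝 0) := by
    have hg : Tendsto (fun t : ℝ => Real.exp (-t)) atTop (𝓝 0) :=
      Real.tendsto_exp_atBot.comp tendsto_neg_atTop_atBot
    apply squeeze_zero' (Eventually.of_forall fun t => abs_nonneg _) ?_ hg
    · have hb := bound18 0 (x + 1) hx
      have hp : ∀ᶠ t : ℝ in atTop, |p.eval t| ≤ Real.exp t := by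
        have h0 := (p.tendsto_div_exp_atTop.eventually
          (Metric.ball_mem_nhds (0:ℝ) one_pos)).and (eventually_ge_atTop (0:ℝ))
        filter_upwards [h0] with t ⟨h1, h2⟩
        have := mem_ball_zero_iff.1 h1
        rw [Real.norm_eq_abs, abs_div, abs_of_nonneg (Real.exp_pos t).le,
          div_lt_one (Real.exp_pos t)] at this
        exact this.le
      filter_upwards [hb, hp, eventually_ge_atTop (0:ℝ)] with t hb hp ht0
      rw [abs_mul, abs_of_nonneg (Real.exp_pos _).le]
      calc |p.eval t| * Real.exp ((-t ^ 3 + t) * x)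
          ≤ Real.exp t * Real.exp (-x * t ^ 3 + x * t) := by
            apply mul_le_mul hp (Real.exp_le_exp.2 (by nlinarith)) (Real.exp_pos _).le
              (Real.exp_pos _).le
        _ = t ^ 0 * Real.exp (-x * t ^ 3 + (x+1) * t) := by
            rw [pow_zero, one_mul, ← Real.exp_add]; ring_nf
        _ ≤ Real.exp (-t) := hb
  exact tendsto_zero_iff_abs_tendsto_zero _ |>.2 habs

lemma integ18X (q : Polynomial ℝ) {x : ℝ} (hx : 0 < x) :
    IntegrableOn (fun t : ℝ => q.eval t * Real.exp (-(x/2) * t ^ 3 + (3*x/2) * t))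
      (Set.Ioi 0) := integPoly' q (3*x/2) (half_pos hx)

lemma hasDerivAt_int18 (n : ℕ) {x : ℝ} (hx : 0 < x) :
    HasDerivAt (fun y => ∫ t in Set.Ioi (0:ℝ), (-t ^ 3 + t) ^ n * Real.exp ((-t ^ 3 + t) * y))
      (∫ t in Set.Ioi (0:ℝ), (-t ^ 3 + t) ^ (n + 1) * Real.exp ((-t ^ 3 + t) * x)) x := by
  have hmeas : ∀ y : ℝ, AEStronglyMeasurable
      (fun t : ℝ => (-t ^ 3 + t) ^ n * Real.exp ((-t ^ 3 + t) * y))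
      (volume.restrict (Set.Ioi 0)) :=
    fun y => Continuous.aestronglyMeasurable (by fun_prop)
  have hmeas' : AEStronglyMeasurable
      (fun t : ℝ => (-t ^ 3 + t) ^ (n + 1) * Real.exp ((-t ^ 3 + t) * x))
      (volume.restrict (Set.Ioi 0)) :=
    Continuous.aestronglyMeasurable (by fun_prop)
  have hint : Integrable (fun t : ℝ => (-t ^ 3 + t) ^ n * Real.exp ((-t ^ 3 + t) * x))
      (volume.restrict (Set.Ioi 0)) := by
    have h := integPoly ((-Polynomial.X ^ 3 + Polynomial.X) ^ n) hx
    simp only [Polynomial.eval_pow, Polynomial.eval_add, Polynomial.eval_neg,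
      Polynomial.eval_X] at h
    exact h
  have hbint : Integrable
      (fun t : ℝ => (t ^ 3 + t) ^ (n + 1) * Real.exp (-(x/2) * t ^ 3 + (3*x/2) * t))
      (volume.restrict (Set.Ioi 0)) := by
    have h := integ18X ((Polynomial.X ^ 3 + Polynomial.X) ^ (n + 1)) hx
    simp only [Polynomial.eval_pow, Polynomial.eval_add, Polynomial.eval_X] at h
    exact h
  have key := hasDerivAt_integral_of_dominated_loc_of_deriv_le
      (F := fun (y : ℝ) (t : ℝ) => (-t ^ 3 + t) ^ n * Real.exp ((-t ^ 3 + t) * y))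
      (F' := fun (y : ℝ) (t : ℝ) => (-t ^ 3 + t) ^ (n + 1) * Real.exp ((-t ^ 3 + t) * y))
      (μ := volume.restrict (Set.Ioi 0)) (x₀ := x)
      (bound := fun t : ℝ => (t ^ 3 + t) ^ (n + 1) * Real.exp (-(x/2) * t ^ 3 + (3*x/2) * t))
      (Metric.ball_mem_nhds x (half_pos hx)) (Filter.Eventually.of_forall hmeas) hint hmeas' ?_ hbint ?_
  · exact key.2
  · filter_upwards [ae_restrict_mem measurableSet_Ioi] with t ht
    intro y hy
    rw [Metric.mem_ball, Real.dist_eq, abs_sub_lt_iff] at hy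
    have ht0 : (0:ℝ) < t := ht
    rw [Real.norm_eq_abs, abs_mul, abs_pow, abs_of_nonneg (Real.exp_pos _).le]
    have h1 : |(-t ^ 3 + t)| ≤ t ^ 3 + t := by
      rw [abs_le]; constructor <;> nlinarith [pow_pos ht0 3]
    have h2 : Real.exp ((-t ^ 3 + t) * y) ≤ Real.exp (-(x/2) * t ^ 3 + (3*x/2) * t) := by
      apply Real.exp_le_exp.2
      nlinarith [pow_pos ht0 3, mul_nonneg (pow_pos ht0 3).le (by linarith : (0:ℝ) ≤ y - x/2)]
    exact mul_le_mul (pow_le_pow_left₀ (abs_nonneg _) h1 _) h2 (Real.exp_pos _).le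
      (by positivity)
  · filter_upwards [ae_restrict_mem measurableSet_Ioi] with t _
    intro y _
    have h := (((hasDerivAt_id y).const_mul (-t ^ 3 + t)).exp).const_mul ((-t ^ 3 + t) ^ n)
    simp only [id_eq] at h
    exact h.congr_deriv (by ring)

lemma ftc18 {x : ℝ} (hx : 0 < x) :
    ∫ t in Set.Ioi (0:ℝ),
        (-27 * x ^ 2 * ((-t ^ 3 + t) ^ 2 * Real.exp ((-t ^ 3 + t) * x))
          - 27 * x * ((-t ^ 3 + t) ^ 1 * Real.exp ((-t ^ 3 + t) * x))
          + (4 * x ^ 2 + 3) * ((-t ^ 3 + t) ^ 0 * Real.exp ((-t ^ 3 + t) * x))) = -4 * x := by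
  set f : ℝ → ℝ := fun t => (x * (9*t^4 - 15*t^2 + 4) + 3*t) * Real.exp ((-t^3+t)*x) with hf
  have hderiv : ∀ t ∈ Set.Ici (0:ℝ), HasDerivAt f
      (-27 * x ^ 2 * ((-t ^ 3 + t) ^ 2 * Real.exp ((-t ^ 3 + t) * x))
        - 27 * x * ((-t ^ 3 + t) ^ 1 * Real.exp ((-t ^ 3 + t) * x))
        + (4 * x ^ 2 + 3) * ((-t ^ 3 + t) ^ 0 * Real.exp ((-t ^ 3 + t) * x))) t := by
    intro t _
    have hP : HasDerivAt (fun t : ℝ => x * (9*t^4 - 15*t^2 + 4) + 3*t)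
        (x * (36*t^3 - 30*t) + 3) t := by
      have h1 := ((((hasDerivAt_pow 4 t).const_mul (9:ℝ)).sub
        ((hasDerivAt_pow 2 t).const_mul (15:ℝ))).add_const (4:ℝ)).const_mul x
      have h2 := (hasDerivAt_id t).const_mul (3:ℝ)
      exact (h1.add h2).congr_deriv (by push_cast; ring)
    have hE : HasDerivAt (fun t : ℝ => Real.exp ((-t^3+t)*x))
        (Real.exp ((-t^3+t)*x) * ((-(3*t^2)+1)*x)) t := by
      have h3 : HasDerivAt (fun t : ℝ => (-t^3+t)*x) ((-(3*t^2)+1)*x) t := by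
        have := (((hasDerivAt_pow 3 t).neg).add (hasDerivAt_id t)).mul_const x
        simp only [Pi.add_apply, Pi.neg_apply, id_eq] at this
        exact this.congr_deriv (by push_cast; ring)
      exact h3.exp
    have h4 := hP.mul hE
    exact h4.congr_deriv (by ring)
  have htend : Tendsto f atTop (𝓝 0) := by
    have h := tend18 (Polynomial.C x * (9*Polynomial.X^4 - 15*Polynomial.X^2 + 4)
      + 3*Polynomial.X) hx
    have hfp : f = fun t : ℝ => (Polynomial.C x * (9*Polynomial.X^4 - 15*Polynomial.X^2 + 4)
        + 3*Polynomial.X).eval t * Real.exp ((-t^3+t)*x) := by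
      funext t
      rw [hf]
      simp
    rw [hfp]
    exact h
  have hint : IntegrableOn (fun t : ℝ =>
      -27 * x ^ 2 * ((-t ^ 3 + t) ^ 2 * Real.exp ((-t ^ 3 + t) * x))
        - 27 * x * ((-t ^ 3 + t) ^ 1 * Real.exp ((-t ^ 3 + t) * x))
        + (4 * x ^ 2 + 3) * ((-t ^ 3 + t) ^ 0 * Real.exp ((-t ^ 3 + t) * x)))
      (Set.Ioi 0) := by
    have h := integPoly (Polynomial.C (-27*x^2) * (-Polynomial.X^3+Polynomial.X)^2
      + Polynomial.C (-27*x) * (-Polynomial.X^3+Polynomial.X)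
      + Polynomial.C (4*x^2+3)) hx
    have heq : (fun t : ℝ =>
        -27 * x ^ 2 * ((-t ^ 3 + t) ^ 2 * Real.exp ((-t ^ 3 + t) * x))
          - 27 * x * ((-t ^ 3 + t) ^ 1 * Real.exp ((-t ^ 3 + t) * x))
          + (4 * x ^ 2 + 3) * ((-t ^ 3 + t) ^ 0 * Real.exp ((-t ^ 3 + t) * x)))
        = fun t : ℝ => (Polynomial.C (-27*x^2) * (-Polynomial.X^3+Polynomial.X)^2
          + Polynomial.C (-27*x) * (-Polynomial.X^3+Polynomial.X)
          + Polynomial.C (4*x^2+3)).eval t * Real.exp ((-t^3+t)*x) := by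
      funext t
      simp
      ring
    rw [heq]
    exact h
  have hkey := integral_Ioi_of_hasDerivAt_of_tendsto' hderiv hint htend
  rw [hkey, hf]
  norm_num
  ring

/-- `v(x) = ∫₀^∞ exp((−t³+t)x) dt` -/
noncomputable def v18 (x : ℝ) : ℝ := ∫ t in Set.Ioi (0 : ℝ), Real.exp ((-t ^ 3 + t) * x)

/-- For `x > 0`, `v(x) = ∫₀^∞ exp((−t³+t)x) dt` satisfies
`−27x² v'' − 27x v' + (4x² + 3) v = −4x`. -/
theorem stmt18 (x : ℝ) (hx : 0 < x) :
    -27 * x ^ 2 * deriv (deriv v18) x - 27 * x * deriv v18 x + (4 * x ^ 2 + 3) * v18 x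
      = -4 * x := by
  have hfun0 : v18 = fun y => ∫ t in Set.Ioi (0:ℝ),
      (-t ^ 3 + t) ^ 0 * Real.exp ((-t ^ 3 + t) * y) := by
    funext y; unfold v18; simp
  have hg1 : ∀ y : ℝ, 0 < y → HasDerivAt v18
      (∫ t in Set.Ioi (0:ℝ), (-t ^ 3 + t) ^ (0 + 1) * Real.exp ((-t ^ 3 + t) * y)) y := by
    intro y hy; rw [hfun0]; exact hasDerivAt_int18 0 hy
  have hderiv_eq : deriv v18 =ᶠ[𝓝 x] fun y => ∫ t in Set.Ioi (0:ℝ),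
      (-t ^ 3 + t) ^ 1 * Real.exp ((-t ^ 3 + t) * y) := by
    filter_upwards [isOpen_Ioi.mem_nhds (show x ∈ Set.Ioi 0 from hx)] with y hy
    simpa using (hg1 y hy).deriv
  have h1 : deriv v18 x
      = ∫ t in Set.Ioi (0:ℝ), (-t ^ 3 + t) ^ 1 * Real.exp ((-t ^ 3 + t) * x) := by
    simpa using (hg1 x hx).deriv
  have h2 : deriv (deriv v18) x
      = ∫ t in Set.Ioi (0:ℝ), (-t ^ 3 + t) ^ 2 * Real.exp ((-t ^ 3 + t) * x) := by
    rw [hderiv_eq.deriv_eq]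
    simpa using (hasDerivAt_int18 1 hx).deriv
  have h0 : v18 x = ∫ t in Set.Ioi (0:ℝ),
      (-t ^ 3 + t) ^ 0 * Real.exp ((-t ^ 3 + t) * x) := by rw [hfun0]
  rw [h0, h1, h2]
  have hi : ∀ n : ℕ, IntegrableOn
      (fun t : ℝ => (-t ^ 3 + t) ^ n * Real.exp ((-t ^ 3 + t) * x)) (Set.Ioi 0) := by
    intro n
    have h := integPoly ((-Polynomial.X ^ 3 + Polynomial.X) ^ n) hx
    simp only [Polynomial.eval_pow, Polynomial.eval_add, Polynomial.eval_neg,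
      Polynomial.eval_X] at h
    exact h
  have h3 : Integrable (fun t : ℝ =>
      -27 * x ^ 2 * ((-t ^ 3 + t) ^ 2 * Real.exp ((-t ^ 3 + t) * x))
        - 27 * x * ((-t ^ 3 + t) ^ 1 * Real.exp ((-t ^ 3 + t) * x)))
      (volume.restrict (Set.Ioi 0)) := ((hi 2).const_mul _).sub ((hi 1).const_mul _)
  rw [← MeasureTheory.integral_const_mul, ← MeasureTheory.integral_const_mul,
    ← MeasureTheory.integral_const_mul,
    ← MeasureTheory.integral_sub ((hi 2).const_mul _) ((hi 1).const_mul _),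
    ← MeasureTheory.integral_add h3 ((hi 0).const_mul _)]
  exact ftc18 hx
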